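/- Let x_1,…,x_d be elements of a commutative ring R and let 0 → L → M → N → 0 be a short exact sequence of finitely generated R-modules. Then 𝔥^d_x(M) ≤ 𝔥^d_x(L) + 𝔥^d_x(N) in [0,∞]. -/

import Mathlib

open scoped BigOperators ENNReal

universe u v

/-- A filtration of `M` of length `h` whose factors are cyclic modules killed by `J`. -/
def HasQLFiltration (S : Type u) [CommRing S] (J : Ideal S)
    (M : Type v) [AddCommGroup M] [Module S M] (h : ℕ) : Prop :=
  ∃ c : Fin (h + 1) → Submodule S M,
    Monotone c ∧ c 0 = ⊥ ∧ c (Fin.last h) = ⊤ ∧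
    ∀ i : Fin h,
      (∃ m : M, c i.succ = c i.castSucc ⊔ Submodule.span S {m}) ∧
      ∀ a ∈ J, ∀ x ∈ c i.succ, a • x ∈ c i.castSucc

/-- The `J`-quasilength of `M`. -/
noncomputable def quasilength (S : Type u) [CommRing S] (J : Ideal S)
    (M : Type v) [AddCommGroup M] [Module S M] : ℕ∞ :=
  sInf {n : ℕ∞ | ∃ h : ℕ, n = (h : ℕ∞) ∧ HasQLFiltration S J M h}

/-- The ideal `(x₁^{t₁}, …, x_d^{t_d})`. -/
def powerIdeal {R : Type u} [CommRing R] {d : ℕ} (x : Fin d → R) (t : Fin d → ℕ) : Ideal R :=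
  Ideal.span (Set.range fun i => x i ^ t i)

/-- The content `𝔥^d_x(M)` of `M` with respect to `x₁, …, x_d`. -/
noncomputable def content {R : Type u} [CommRing R] {d : ℕ} (x : Fin d → R)
    (M : Type v) [AddCommGroup M] [Module R M] : ℝ≥0∞ :=
  ⨆ s : ℕ, ⨅ t : {t : Fin d → ℕ // ∀ i, s ≤ t i ∧ 0 < t i},
    (quasilength R (Ideal.span (Set.range x))
        (M ⧸ (powerIdeal x (t : Fin d → ℕ) • (⊤ : Submodule R M))) : ℝ≥0∞) /
      ∏ i, ((t : Fin d → ℕ) i : ℝ≥0∞)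

section QL
variable {S : Type u} [CommRing S] {J : Ideal S}
variable {A : Type v} {B : Type v} {C : Type v}
variable [AddCommGroup A] [Module S A] [AddCommGroup B] [Module S B]
variable [AddCommGroup C] [Module S C]

theorem hasQLFiltration_of_surjective (π : A →ₗ[S] B) (hπ : Function.Surjective π)
    {h : ℕ} (hA : HasQLFiltration S J A h) : HasQLFiltration S J B h := by
  obtain ⟨c, mono, h0, hlast, hstep⟩ := hA
  refine ⟨fun i => (c i).map π, fun i j hij => Submodule.map_mono (mono hij), ?_, ?_, ?_⟩
  · dsimp only; rw [h0, Submodule.map_bot]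
  · dsimp only; rw [hlast, Submodule.map_top, LinearMap.range_eq_top.2 hπ]
  · intro i
    obtain ⟨⟨m, hm⟩, hkill⟩ := hstep i
    constructor
    · exact ⟨π m, by dsimp only; rw [hm, Submodule.map_sup, Submodule.map_span, Set.image_singleton]⟩
    · dsimp only
      rintro a ha x hx
      rcases Submodule.mem_map.1 hx with ⟨y, hy, rfl⟩
      rw [← map_smul]
      exact Submodule.mem_map_of_mem (hkill a ha y hy)

theorem quasilength_le_of_surjective (π : A →ₗ[S] B) (hπ : Function.Surjective π) :
    quasilength S J B ≤ quasilength S J A := by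
  apply sInf_le_sInf
  rintro n ⟨h, rfl, hA⟩
  exact ⟨h, rfl, hasQLFiltration_of_surjective π hπ hA⟩

theorem quasilength_le_of_filtration {h : ℕ} (hA : HasQLFiltration S J A h) :
    quasilength S J A ≤ (h : ℕ∞) :=
  sInf_le ⟨h, rfl, hA⟩

theorem hasQLFiltration_of_exact (f : A →ₗ[S] B) (g : B →ₗ[S] C)
    (hg : Function.Surjective g) (hfg : Function.Exact f g)
    {a b : ℕ} (hA : HasQLFiltration S J A a) (hC : HasQLFiltration S J C b) :
    HasQLFiltration S J B (a + b) := by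
  obtain ⟨cL, monoL, hL0, hLlast, hLstep⟩ := hA
  obtain ⟨cN, monoN, hN0, hNlast, hNstep⟩ := hC
  have hker : LinearMap.ker g = LinearMap.range f := (LinearMap.exact_iff).1 hfg
  set D : ℕ → Submodule S B := fun n =>
    if n ≤ a then Submodule.map f (cL ⟨min n a, Nat.lt_succ_of_le (min_le_right n a)⟩)
    else Submodule.comap g (cN ⟨min (n - a) b, Nat.lt_succ_of_le (min_le_right _ b)⟩) with hD
  have hD1 : ∀ n (hn : n ≤ a), D n = Submodule.map f (cL ⟨n, by omega⟩) := by
    intro n hn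
    rw [hD]; dsimp only; rw [if_pos hn]
    congr 1
    exact congrArg cL (Fin.ext (min_eq_left hn))
  have hD2 : ∀ n (h1 : a ≤ n) (h2 : n ≤ a + b), D n = Submodule.comap g (cN ⟨n - a, by omega⟩) := by
    intro n h1 h2
    rcases eq_or_lt_of_le h1 with heq | hlt
    · subst heq
      rw [hD1 a le_rfl]
      have e0 : (⟨a - a, by omega⟩ : Fin (b + 1)) = 0 := Fin.ext (by simp)
      have el : (⟨a, by omega⟩ : Fin (a + 1)) = Fin.last a := Fin.ext rfl
      rw [e0, hN0, el, hLlast, Submodule.map_top, Submodule.comap_bot, hker]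
    · rw [hD]; dsimp only; rw [if_neg (by omega)]
      congr 1
      exact congrArg cN (Fin.ext (min_eq_left (by omega)))
  have hDmono : ∀ m n, m ≤ n → n ≤ a + b → D m ≤ D n := by
    intro m n hmn hn
    rcases le_or_gt n a with h2 | h2
    · rw [hD1 m (by omega), hD1 n h2]
      exact Submodule.map_mono (monoL (Fin.mk_le_mk.2 hmn))
    · rcases le_or_gt m a with h3 | h3
      · calc D m ≤ LinearMap.range f := by
              rw [hD1 m h3]; exact LinearMap.map_le_range
          _ = LinearMap.ker g := hker.symm
          _ ≤ D n := by
              rw [hD2 n (by omega) hn]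
              exact Submodule.comap_mono bot_le
      · rw [hD2 m (by omega) (by omega), hD2 n (by omega) hn]
        exact Submodule.comap_mono (monoN (Fin.mk_le_mk.2 (by omega)))
  refine ⟨fun i => D (i : ℕ), ?_, ?_, ?_, ?_⟩
  · intro i j hij
    exact hDmono _ _ (Fin.le_def.1 hij) (by omega)
  · show D 0 = ⊥
    rw [hD1 0 (by omega)]
    have : (⟨0, by omega⟩ : Fin (a + 1)) = 0 := rfl
    rw [this, hL0, Submodule.map_bot]
  · show D (a + b) = ⊤
    rw [hD2 (a + b) (by omega) le_rfl]
    have : (⟨a + b - a, by omega⟩ : Fin (b + 1)) = Fin.last b := Fin.ext (by simp)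
    rw [this, hNlast, Submodule.comap_top]
  · intro i
    show (∃ m : B, D ((i : ℕ) + 1) = D (i : ℕ) ⊔ Submodule.span S {m}) ∧
      ∀ r ∈ J, ∀ y ∈ D ((i : ℕ) + 1), r • y ∈ D (i : ℕ)
    rcases le_or_gt ((i : ℕ) + 1) a with hi | hi
    · rw [hD1 _ hi, hD1 _ (by omega)]
      obtain ⟨⟨m, hm⟩, hkill⟩ := hLstep ⟨(i : ℕ), by omega⟩
      have es : ((⟨(i : ℕ), by omega⟩ : Fin a).succ : Fin (a + 1)) = ⟨(i : ℕ) + 1, by omega⟩ :=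
        Fin.ext rfl
      have ec : ((⟨(i : ℕ), by omega⟩ : Fin a).castSucc : Fin (a + 1)) = ⟨(i : ℕ), by omega⟩ :=
        Fin.ext rfl
      rw [es, ec] at hm hkill
      constructor
      · exact ⟨f m, by rw [hm, Submodule.map_sup, Submodule.map_span, Set.image_singleton]⟩
      · intro r hr y hy
        rcases Submodule.mem_map.1 hy with ⟨z, hz, rfl⟩
        rw [← map_smul]
        exact Submodule.mem_map_of_mem (hkill r hr z hz)
    · set k := (i : ℕ) - a with hk
      have hkb : k < b := by omega
      have e1 : D ((i : ℕ) + 1) = Submodule.comap g (cN ⟨k + 1, by omega⟩) := by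
        rw [hD2 _ (by omega) (by omega)]
        exact congrArg _ (congrArg cN (Fin.ext (by simp; omega)))
      have e2 : D (i : ℕ) = Submodule.comap g (cN ⟨k, by omega⟩) := by
        rw [hD2 _ (by omega) (by omega)]
      obtain ⟨⟨m, hm⟩, hkill⟩ := hNstep ⟨k, hkb⟩
      have es : ((⟨k, hkb⟩ : Fin b).succ : Fin (b + 1)) = ⟨k + 1, by omega⟩ := Fin.ext rfl
      have ec : ((⟨k, hkb⟩ : Fin b).castSucc : Fin (b + 1)) = ⟨k, by omega⟩ := Fin.ext rfl
      rw [es, ec] at hm hkill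
      obtain ⟨m', hm'⟩ := hg m
      rw [e1, e2]
      constructor
      · refine ⟨m', ?_⟩
        rw [hm]
        apply le_antisymm
        · intro y hy
          have hy' : g y ∈ cN ⟨k, by omega⟩ ⊔ Submodule.span S {m} := hy
          rcases Submodule.mem_sup.1 hy' with ⟨u, hu, v, hv, huv⟩
          rcases Submodule.mem_span_singleton.1 hv with ⟨r, rfl⟩
          have hsub : y - r • m' ∈ Submodule.comap g (cN ⟨k, by omega⟩) := by
            simp only [Submodule.mem_comap, map_sub, map_smul, hm']
            rw [show g y = u + r • m from huv.symm]
            simpa using hu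
          rw [show y = (y - r • m') + r • m' from (sub_add_cancel y (r • m')).symm]
          exact Submodule.add_mem _ (Submodule.mem_sup_left hsub)
            (Submodule.mem_sup_right (Submodule.smul_mem _ _ (Submodule.mem_span_singleton_self m')))
        · apply sup_le
          · exact Submodule.comap_mono le_sup_left
          · rw [Submodule.span_le]
            intro y hy
            have hym : y = m' := hy
            rw [hym]
            refine Submodule.mem_comap.2 ?_
            rw [hm']
            exact Submodule.mem_sup_right (Submodule.mem_span_singleton_self m)
      · intro r hr y hy
        refine Submodule.mem_comap.2 ?_
        rw [map_smul]
        exact hkill r hr (g y) (Submodule.mem_comap.1 hy)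
theorem quasilength_le_add_of_exact (f : A →ₗ[S] B) (g : B →ₗ[S] C)
    (hg : Function.Surjective g) (hfg : Function.Exact f g) :
    quasilength S J B ≤ quasilength S J A + quasilength S J C := by
  by_cases hA : {h : ℕ | HasQLFiltration S J A h}.Nonempty
  · by_cases hC : {h : ℕ | HasQLFiltration S J C h}.Nonempty
    · set a := sInf {h : ℕ | HasQLFiltration S J A h} with ha
      set b := sInf {h : ℕ | HasQLFiltration S J C h} with hb
      have hFa : HasQLFiltration S J A a := Nat.sInf_mem hA
      have hFb : HasQLFiltration S J C b := Nat.sInf_mem hC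
      have hFB : HasQLFiltration S J B (a + b) :=
        hasQLFiltration_of_exact f g hg hfg hFa hFb
      have h1 : quasilength S J B ≤ ((a + b : ℕ) : ℕ∞) := quasilength_le_of_filtration hFB
      have h2 : ((a : ℕ) : ℕ∞) ≤ quasilength S J A := by
        apply le_sInf
        rintro n ⟨h, rfl, hFh⟩
        exact Nat.cast_le.2 (Nat.sInf_le hFh)
      have h3 : ((b : ℕ) : ℕ∞) ≤ quasilength S J C := by
        apply le_sInf
        rintro n ⟨h, rfl, hFh⟩
        exact Nat.cast_le.2 (Nat.sInf_le hFh)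
      calc quasilength S J B ≤ ((a + b : ℕ) : ℕ∞) := h1
        _ = ((a : ℕ) : ℕ∞) + ((b : ℕ) : ℕ∞) := by push_cast; rfl
        _ ≤ quasilength S J A + quasilength S J C := add_le_add h2 h3
    · have : quasilength S J C = ⊤ := by
        rw [quasilength, sInf_eq_top]
        rintro n ⟨h, rfl, hFh⟩
        exact absurd ⟨h, hFh⟩ hC
      rw [this, add_top]
      exact le_top
  · have : quasilength S J A = ⊤ := by
      rw [quasilength, sInf_eq_top]
      rintro n ⟨h, rfl, hFh⟩
      exact absurd ⟨h, hFh⟩ hA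
    rw [this, top_add]
    exact le_top

end QL

section Content
variable {R : Type u} [CommRing R] {d : ℕ} (x : Fin d → R)
variable {A : Type v} {B : Type v} {C : Type v}
variable [AddCommGroup A] [Module R A] [AddCommGroup B] [Module R B]
variable [AddCommGroup C] [Module R C]

/-- abbreviation for the quasilength at level `t` -/
noncomputable def qlev (M : Type v) [AddCommGroup M] [Module R M] (t : Fin d → ℕ) : ℕ∞ :=
  quasilength R (Ideal.span (Set.range x)) (M ⧸ (powerIdeal x t • (⊤ : Submodule R M)))

theorem qlev_le_add_of_exact (f : A →ₗ[R] B) (g : B →ₗ[R] C)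
    (hg : Function.Surjective g) (hfg : Function.Exact f g) (t : Fin d → ℕ) :
    qlev x B t ≤ qlev x A t + qlev x C t := by
  classical
  set I := Ideal.span (Set.range x) with hI
  set F : Submodule R B := powerIdeal x t • ⊤ with hF
  set W : Submodule R (B ⧸ F) := (LinearMap.range f).map F.mkQ with hW
  have step1 : quasilength R I (B ⧸ F) ≤
      quasilength R I W + quasilength R I ((B ⧸ F) ⧸ W) :=
    quasilength_le_add_of_exact W.subtype W.mkQ
      (Submodule.mkQ_surjective W) (LinearMap.exact_subtype_mkQ W)
  have step2 : quasilength R I W ≤ qlev x A t := by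
    set φ : A →ₗ[R] W := LinearMap.codRestrict W (F.mkQ ∘ₗ f)
      (fun l => Submodule.mem_map_of_mem (LinearMap.mem_range_self f l)) with hφ
    have hker : powerIdeal x t • (⊤ : Submodule R A) ≤ LinearMap.ker φ := by
      rw [Submodule.smul_le]
      intro r hr l _
      refine LinearMap.mem_ker.2 (Subtype.ext ?_)
      show F.mkQ (f (r • l)) = 0
      rw [map_smul]
      rw [Submodule.mkQ_apply, Submodule.Quotient.mk_eq_zero]
      exact Submodule.smul_mem_smul hr trivial
    set ψ := (powerIdeal x t • (⊤ : Submodule R A)).liftQ φ hker with hψ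
    have hsurj : Function.Surjective ψ := by
      rintro ⟨w, hw⟩
      rcases Submodule.mem_map.1 hw with ⟨y, hy, rfl⟩
      rcases LinearMap.mem_range.1 hy with ⟨l, rfl⟩
      exact ⟨Submodule.Quotient.mk l, rfl⟩
    exact quasilength_le_of_surjective ψ hsurj
  have step3 : quasilength R I ((B ⧸ F) ⧸ W) ≤ qlev x C t := by
    set θ : B →ₗ[R] (B ⧸ F) ⧸ W := W.mkQ ∘ₗ F.mkQ with hθ
    have hkerθ : LinearMap.ker g ≤ LinearMap.ker θ := by
      intro y hy
      have : y ∈ LinearMap.range f := by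
        rw [← (LinearMap.exact_iff).1 hfg]; exact hy
      rcases LinearMap.mem_range.1 this with ⟨l, rfl⟩
      refine LinearMap.mem_ker.2 ?_
      show W.mkQ (F.mkQ (f l)) = 0
      rw [Submodule.mkQ_apply, Submodule.Quotient.mk_eq_zero]
      exact Submodule.mem_map_of_mem (LinearMap.mem_range_self f l)
    set θ' : C →ₗ[R] (B ⧸ F) ⧸ W :=
      ((LinearMap.ker g).liftQ θ hkerθ) ∘ₗ
        (g.quotKerEquivOfSurjective hg).symm.toLinearMap with hθ'
    have hcomp : ∀ m : B, θ' (g m) = θ m := by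
      intro m
      have h1 : (g.quotKerEquivOfSurjective hg).symm (g m) = Submodule.Quotient.mk m := by
        apply (g.quotKerEquivOfSurjective hg).injective
        rw [LinearEquiv.apply_symm_apply]
        rfl
      show ((LinearMap.ker g).liftQ θ hkerθ) ((g.quotKerEquivOfSurjective hg).symm (g m)) = θ m
      rw [h1]
      rfl
    have hkerθ' : powerIdeal x t • (⊤ : Submodule R C) ≤ LinearMap.ker θ' := by
      rw [Submodule.smul_le]
      intro r hr n _
      rcases hg n with ⟨m, rfl⟩
      refine LinearMap.mem_ker.2 ?_
      rw [← map_smul g, hcomp]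
      show W.mkQ (F.mkQ (r • m)) = 0
      have hz : F.mkQ (r • m) = 0 := by
        rw [Submodule.mkQ_apply, Submodule.Quotient.mk_eq_zero]
        exact Submodule.smul_mem_smul hr trivial
      rw [hz, map_zero]
    set ψ' := (powerIdeal x t • (⊤ : Submodule R C)).liftQ θ' hkerθ' with hψ'
    have hsurj : Function.Surjective ψ' := by
      intro z
      rcases Submodule.mkQ_surjective W z with ⟨z', rfl⟩
      rcases Submodule.mkQ_surjective F z' with ⟨m, rfl⟩
      exact ⟨Submodule.Quotient.mk (g m), by rw [hψ', Submodule.liftQ_apply, hcomp]; rfl⟩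
    exact quasilength_le_of_surjective ψ' hsurj
  calc qlev x B t = quasilength R I (B ⧸ F) := rfl
    _ ≤ quasilength R I W + quasilength R I ((B ⧸ F) ⧸ W) := step1
    _ ≤ qlev x A t + qlev x C t := add_le_add step2 step3

theorem powerIdeal_le_of_update {t : Fin d → ℕ} {j : Fin d} {u v : ℕ} (huv : u ≤ v) :
    powerIdeal x (Function.update t j v) ≤ powerIdeal x (Function.update t j u) := by
  rw [powerIdeal, Ideal.span_le]
  rintro y ⟨i, rfl⟩
  show x i ^ Function.update t j v i ∈ _
  by_cases hij : i = j
  · subst hij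
    simp only [Function.update_self]
    rw [show v = u + (v - u) by omega, pow_add]
    exact Ideal.mul_mem_right _ _
      (Ideal.subset_span ⟨i, by simp⟩)
  · rw [Function.update_of_ne hij]
    exact Ideal.subset_span ⟨i, by simp [Function.update_of_ne hij]⟩

theorem qlev_update_le (M : Type v) [AddCommGroup M] [Module R M] (t : Fin d → ℕ)
    (j : Fin d) (m : ℕ) :
    qlev x M (Function.update t j ((m + 1) * t j)) ≤ (m + 1 : ℕ∞) * qlev x M t := by
  classical
  induction m with
  | zero =>
      norm_num [Function.update_eq_self]
  | succ m ih =>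
      set I := Ideal.span (Set.range x) with hI
      set P' : Submodule R M := powerIdeal x (Function.update t j ((m + 1 + 1) * t j)) • ⊤ with hP'
      set Pm : Submodule R M := powerIdeal x (Function.update t j ((m + 1) * t j)) • ⊤ with hPm
      have hIle : powerIdeal x (Function.update t j ((m + 1 + 1) * t j)) ≤
          powerIdeal x (Function.update t j ((m + 1) * t j)) :=
        powerIdeal_le_of_update x (Nat.mul_le_mul_right _ (by omega))
      have hle : P' ≤ Pm := Submodule.smul_mono_left hIle
      set K : Submodule R (M ⧸ P') := Pm.map P'.mkQ with hK
      have step1 : quasilength R I (M ⧸ P') ≤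
          quasilength R I K + quasilength R I ((M ⧸ P') ⧸ K) :=
        quasilength_le_add_of_exact K.subtype K.mkQ
          (Submodule.mkQ_surjective K) (LinearMap.exact_subtype_mkQ K)
      have step3 : quasilength R I ((M ⧸ P') ⧸ K) ≤ quasilength R I (M ⧸ Pm) := by
        have e := Submodule.quotientQuotientEquivQuotient P' Pm hle
        exact quasilength_le_of_surjective e.symm.toLinearMap e.symm.surjective
      have step2 : quasilength R I K ≤ qlev x M t := by
        set cc := x j ^ ((m + 1) * t j) with hcc
        have hccPm : cc ∈ powerIdeal x (Function.update t j ((m + 1) * t j)) :=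
          Ideal.subset_span ⟨j, by simp [hcc]⟩
        set ψ : M →ₗ[R] (M ⧸ P') := P'.mkQ ∘ₗ (cc • (LinearMap.id : M →ₗ[R] M)) with hψ
        have hψ_apply : ∀ u : M, ψ u = P'.mkQ (cc • u) := fun u => rfl
        have hmemK : ∀ u : M, ψ u ∈ K := by
          intro u
          rw [hψ_apply]
          exact Submodule.mem_map_of_mem (Submodule.smul_mem_smul hccPm trivial)
        -- surjectivity onto K
        have hKle : K ≤ LinearMap.range ψ := by
          rw [hK, Submodule.map_le_iff_le_comap, hPm, Submodule.smul_le]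
          intro r hr u hu
          refine Submodule.mem_comap.2 ?_
          clear hu
          rw [powerIdeal] at hr
          induction hr using Submodule.span_induction generalizing u with
          | mem y hy =>
              rcases hy with ⟨i, rfl⟩
              show P'.mkQ (x i ^ Function.update t j ((m + 1) * t j) i • u) ∈ _
              by_cases hij : i = j
              · subst hij
                refine ⟨u, ?_⟩
                rw [hψ_apply, hcc, Function.update_self]
              · refine ⟨0, ?_⟩
                rw [hψ_apply, smul_zero, map_zero, Function.update_of_ne hij]
                symm
                rw [Submodule.mkQ_apply, Submodule.Quotient.mk_eq_zero]
                refine Submodule.smul_mem_smul ?_ trivial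
                exact Ideal.subset_span ⟨i, by simp [Function.update_of_ne hij]⟩
          | zero =>
              show P'.mkQ ((0 : R) • u) ∈ _
              rw [zero_smul]
              exact Submodule.zero_mem _
          | add y z _ _ hy hz =>
              show P'.mkQ ((y + z) • u) ∈ _
              rw [add_smul, map_add]
              exact Submodule.add_mem _ (hy u) (hz u)
          | smul a y _ hy =>
              show P'.mkQ ((a • y) • u) ∈ _
              rw [smul_eq_mul, mul_comm a y, mul_smul]
              exact hy (a • u)
        set φ : M →ₗ[R] K := LinearMap.codRestrict K ψ hmemK with hφ
        have hkerφ : powerIdeal x t • (⊤ : Submodule R M) ≤ LinearMap.ker φ := by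
          have hmul : ∀ r ∈ powerIdeal x t,
              cc * r ∈ powerIdeal x (Function.update t j ((m + 1 + 1) * t j)) := by
            intro r hr
            rw [powerIdeal] at hr
            induction hr using Submodule.span_induction with
            | mem y hy =>
                rcases hy with ⟨i, rfl⟩
                by_cases hij : i = j
                · subst hij
                  rw [hcc, ← pow_add]
                  refine Ideal.subset_span ⟨i, ?_⟩
                  simp only [Function.update_self]
                  ring_nf
                · exact Ideal.mul_mem_left _ _
                    (Ideal.subset_span ⟨i, by simp [Function.update_of_ne hij]⟩)
            | zero => rw [mul_zero]; exact Submodule.zero_mem _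
            | add y z _ _ hy hz => rw [mul_add]; exact Submodule.add_mem _ hy hz
            | smul a y _ hy =>
                rw [smul_eq_mul, mul_comm a y, ← mul_assoc]
                exact Ideal.mul_mem_right _ _ hy
          rw [Submodule.smul_le]
          intro r hr u _
          refine LinearMap.mem_ker.2 (Subtype.ext ?_)
          show ψ (r • u) = 0
          rw [hψ_apply, smul_smul, Submodule.mkQ_apply, Submodule.Quotient.mk_eq_zero]
          exact Submodule.smul_mem_smul (hmul r hr) trivial
        set ψ' := (powerIdeal x t • (⊤ : Submodule R M)).liftQ φ hkerφ with hψ'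
        have hsurj : Function.Surjective ψ' := by
          rintro ⟨k, hk⟩
          rcases hKle hk with ⟨u, hu⟩
          exact ⟨Submodule.Quotient.mk u, Subtype.ext (by
            rw [hψ', Submodule.liftQ_apply]
            exact hu)⟩
        exact quasilength_le_of_surjective ψ' hsurj
      calc qlev x M (Function.update t j ((m + 1 + 1) * t j))
          = quasilength R I (M ⧸ P') := rfl
        _ ≤ quasilength R I K + quasilength R I ((M ⧸ P') ⧸ K) := step1
        _ ≤ qlev x M t + quasilength R I (M ⧸ Pm) := add_le_add step2 step3
        _ = qlev x M t + qlev x M (Function.update t j ((m + 1) * t j)) := rfl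
        _ ≤ qlev x M t + (m + 1 : ℕ∞) * qlev x M t := add_le_add_right ih _
        _ = (m + 1 + 1 : ℕ∞) * qlev x M t := by ring

theorem qlev_mul_le (M : Type v) [AddCommGroup M] [Module R M] (t u : Fin d → ℕ)
    (hu : ∀ i, 0 < u i) :
    qlev x M (fun i => u i * t i) ≤ ((∏ i, u i : ℕ) : ℕ∞) * qlev x M t := by
  classical
  have aux : ∀ s : Finset (Fin d),
      qlev x M (fun i => if i ∈ s then u i * t i else t i) ≤
        ((∏ i ∈ s, u i : ℕ) : ℕ∞) * qlev x M t := by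
    intro s
    induction s using Finset.induction_on with
    | empty =>
        simp only [Finset.notMem_empty, if_false, Finset.prod_empty, Nat.cast_one, one_mul]
        exact le_refl _
    | @insert j s hj ih =>
        set t₁ : Fin d → ℕ := fun i => if i ∈ s then u i * t i else t i with ht₁
        have hfun : (fun i => if i ∈ insert j s then u i * t i else t i) =
            Function.update t₁ j (((u j - 1) + 1) * t₁ j) := by
          funext i
          by_cases hij : i = j
          · subst hij
            rw [Function.update_self, if_pos (Finset.mem_insert_self i s), ht₁]
            simp only [if_neg hj]
            have := hu i
            congr 1
            omega
          · rw [Function.update_of_ne hij, ht₁]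
            simp only [Finset.mem_insert]
            by_cases his : i ∈ s
            · rw [if_pos his, if_pos (Or.inr his)]
            · rw [if_neg his, if_neg (by tauto)]
        rw [hfun]
        calc qlev x M (Function.update t₁ j (((u j - 1) + 1) * t₁ j))
            ≤ ((u j - 1 : ℕ) + 1 : ℕ∞) * qlev x M t₁ := qlev_update_le x M t₁ j (u j - 1)
          _ = (((u j - 1) + 1 : ℕ) : ℕ∞) * qlev x M t₁ := by
              rw [Nat.cast_add, Nat.cast_one]
          _ = ((u j : ℕ) : ℕ∞) * qlev x M t₁ := by
              congr 2
              have := hu j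
              omega
          _ ≤ ((u j : ℕ) : ℕ∞) * (((∏ i ∈ s, u i : ℕ) : ℕ∞) * qlev x M t) :=
              mul_le_mul_right ih _
          _ = ((∏ i ∈ insert j s, u i : ℕ) : ℕ∞) * qlev x M t := by
              rw [Finset.prod_insert hj, Nat.cast_mul, mul_assoc]
  have := aux Finset.univ
  simpa only [Finset.mem_univ, if_true] using this

end Content

/-- If `0 → L → M → N → 0` is a short exact sequence of finitely
generated modules over a commutative ring `R` and `x₁, …, x_d ∈ R`, then
`𝔥^d_x(M) ≤ 𝔥^d_x(L) + 𝔥^d_x(N)`. -/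
theorem content_le_add_of_shortExact
    {R : Type u} [CommRing R] {d : ℕ} (x : Fin d → R)
    (L M N : Type v) [AddCommGroup L] [Module R L] [AddCommGroup M] [Module R M]
    [AddCommGroup N] [Module R N]
    [Module.Finite R L] [Module.Finite R M] [Module.Finite R N]
    (f : L →ₗ[R] M) (g : M →ₗ[R] N)
    (hf : Function.Injective f) (hg : Function.Surjective g)
    (hfg : Function.Exact f g) :
    content x M ≤ content x L + content x N := by
  classical
  set Aq : (Fin d → ℕ) → ℝ≥0∞ :=
    fun t => (qlev x L t : ℝ≥0∞) / ∏ i, (t i : ℝ≥0∞) with hAq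
  set Bq : (Fin d → ℕ) → ℝ≥0∞ :=
    fun t => (qlev x M t : ℝ≥0∞) / ∏ i, (t i : ℝ≥0∞) with hBq
  set Cq : (Fin d → ℕ) → ℝ≥0∞ :=
    fun t => (qlev x N t : ℝ≥0∞) / ∏ i, (t i : ℝ≥0∞) with hCq
  have hcontL : content x L = ⨆ s : ℕ, ⨅ t : {t : Fin d → ℕ // ∀ i, s ≤ t i ∧ 0 < t i},
      Aq (t : Fin d → ℕ) := rfl
  have hcontM : content x M = ⨆ s : ℕ, ⨅ t : {t : Fin d → ℕ // ∀ i, s ≤ t i ∧ 0 < t i},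
      Bq (t : Fin d → ℕ) := rfl
  have hcontN : content x N = ⨆ s : ℕ, ⨅ t : {t : Fin d → ℕ // ∀ i, s ≤ t i ∧ 0 < t i},
      Cq (t : Fin d → ℕ) := rfl
  rw [hcontM]
  apply iSup_le
  intro s
  apply ENNReal.le_of_forall_pos_le_add
  intro ε hε htop
  have hL_ne : content x L ≠ ⊤ := fun h => by simp [h, top_add] at htop
  have hN_ne : content x N ≠ ⊤ := fun h => by simp [h, add_top] at htop
  set δ : ℝ≥0∞ := (ε : ℝ≥0∞) / 2 with hδ
  have hδ0 : δ ≠ 0 := (ENNReal.half_pos (by exact_mod_cast hε.ne')).ne'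
  -- pick t1 with Aq t1 < content L + δ
  have h1 : (⨅ t : {t : Fin d → ℕ // ∀ i, s ≤ t i ∧ 0 < t i}, Aq (t : Fin d → ℕ)) <
      content x L + δ := by
    refine lt_of_le_of_lt ?_ (ENNReal.lt_add_right hL_ne hδ0)
    rw [hcontL]
    exact le_iSup (fun s : ℕ => ⨅ t : {t : Fin d → ℕ // ∀ i, s ≤ t i ∧ 0 < t i},
      Aq (t : Fin d → ℕ)) s
  have h2 : (⨅ t : {t : Fin d → ℕ // ∀ i, s ≤ t i ∧ 0 < t i}, Cq (t : Fin d → ℕ)) <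
      content x N + δ := by
    refine lt_of_le_of_lt ?_ (ENNReal.lt_add_right hN_ne hδ0)
    rw [hcontN]
    exact le_iSup (fun s : ℕ => ⨅ t : {t : Fin d → ℕ // ∀ i, s ≤ t i ∧ 0 < t i},
      Cq (t : Fin d → ℕ)) s
  obtain ⟨t1, ht1⟩ := iInf_lt_iff.1 h1
  obtain ⟨t2, ht2⟩ := iInf_lt_iff.1 h2
  set T : Fin d → ℕ := fun i => (t1 : Fin d → ℕ) i * (t2 : Fin d → ℕ) i with hT
  have hTmem : ∀ i, s ≤ T i ∧ 0 < T i := by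
    intro i
    have h1i := t1.2 i
    have h2i := t2.2 i
    constructor
    · calc s ≤ (t1 : Fin d → ℕ) i := h1i.1
        _ ≤ T i := Nat.le_mul_of_pos_right _ h2i.2
    · exact Nat.mul_pos h1i.2 h2i.2
  -- cast products
  have hP1ne0 : (∏ i, ((t1 : Fin d → ℕ) i : ℝ≥0∞)) ≠ 0 := by
    rw [Finset.prod_ne_zero_iff]
    intro i _
    exact_mod_cast (t1.2 i).2.ne'
  have hP2ne0 : (∏ i, ((t2 : Fin d → ℕ) i : ℝ≥0∞)) ≠ 0 := by
    rw [Finset.prod_ne_zero_iff]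
    intro i _
    exact_mod_cast (t2.2 i).2.ne'
  have hP1top : (∏ i, ((t1 : Fin d → ℕ) i : ℝ≥0∞)) ≠ ⊤ :=
    ENNReal.prod_ne_top fun i _ => ENNReal.natCast_ne_top _
  have hP2top : (∏ i, ((t2 : Fin d → ℕ) i : ℝ≥0∞)) ≠ ⊤ :=
    ENNReal.prod_ne_top fun i _ => ENNReal.natCast_ne_top _
  have hprodT : (∏ i, (T i : ℝ≥0∞)) =
      (∏ i, ((t2 : Fin d → ℕ) i : ℝ≥0∞)) * ∏ i, ((t1 : Fin d → ℕ) i : ℝ≥0∞) := by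
    rw [← Finset.prod_mul_distrib]
    apply Finset.prod_congr rfl
    intro i _
    rw [hT]
    push_cast
    ring
  -- key estimate for L
  have hALT : (qlev x L T : ℝ≥0∞) / ∏ i, (T i : ℝ≥0∞) ≤ Aq (t1 : Fin d → ℕ) := by
    have hkey : qlev x L T ≤ ((∏ i, (t2 : Fin d → ℕ) i : ℕ) : ℕ∞) *
        qlev x L (t1 : Fin d → ℕ) := by
      have := qlev_mul_le x L (t1 : Fin d → ℕ) (t2 : Fin d → ℕ) (fun i => (t2.2 i).2)
      have heq : (fun i => (t2 : Fin d → ℕ) i * (t1 : Fin d → ℕ) i) = T := by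
        funext i; rw [hT]; ring
      rwa [heq] at this
    have hcast : (qlev x L T : ℝ≥0∞) ≤
        (∏ i, ((t2 : Fin d → ℕ) i : ℝ≥0∞)) * (qlev x L (t1 : Fin d → ℕ) : ℝ≥0∞) := by
      calc (qlev x L T : ℝ≥0∞)
          ≤ ((((∏ i, (t2 : Fin d → ℕ) i : ℕ) : ℕ∞) *
              qlev x L (t1 : Fin d → ℕ) : ℕ∞) : ℝ≥0∞) := ENat.toENNReal_le.2 hkey
        _ = ((((∏ i, (t2 : Fin d → ℕ) i : ℕ) : ℕ∞) : ℝ≥0∞)) *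
              (qlev x L (t1 : Fin d → ℕ) : ℝ≥0∞) := ENat.toENNReal_mul _ _
        _ = (∏ i, ((t2 : Fin d → ℕ) i : ℝ≥0∞)) * (qlev x L (t1 : Fin d → ℕ) : ℝ≥0∞) := by
              rw [ENat.toENNReal_coe]
              push_cast
              rfl
    calc (qlev x L T : ℝ≥0∞) / ∏ i, (T i : ℝ≥0∞)
        ≤ ((∏ i, ((t2 : Fin d → ℕ) i : ℝ≥0∞)) * (qlev x L (t1 : Fin d → ℕ) : ℝ≥0∞)) /
            ∏ i, (T i : ℝ≥0∞) := ENNReal.div_le_div_right hcast _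
      _ = ((∏ i, ((t2 : Fin d → ℕ) i : ℝ≥0∞)) * (qlev x L (t1 : Fin d → ℕ) : ℝ≥0∞)) /
            ((∏ i, ((t2 : Fin d → ℕ) i : ℝ≥0∞)) * ∏ i, ((t1 : Fin d → ℕ) i : ℝ≥0∞)) := by
            rw [hprodT]
      _ = (qlev x L (t1 : Fin d → ℕ) : ℝ≥0∞) / ∏ i, ((t1 : Fin d → ℕ) i : ℝ≥0∞) :=
            ENNReal.mul_div_mul_left _ _ hP2ne0 hP2top
      _ = Aq (t1 : Fin d → ℕ) := rfl
  -- key estimate for N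
  have hCNT : (qlev x N T : ℝ≥0∞) / ∏ i, (T i : ℝ≥0∞) ≤ Cq (t2 : Fin d → ℕ) := by
    have hkey : qlev x N T ≤ ((∏ i, (t1 : Fin d → ℕ) i : ℕ) : ℕ∞) *
        qlev x N (t2 : Fin d → ℕ) := by
      have := qlev_mul_le x N (t2 : Fin d → ℕ) (t1 : Fin d → ℕ) (fun i => (t1.2 i).2)
      have heq : (fun i => (t1 : Fin d → ℕ) i * (t2 : Fin d → ℕ) i) = T := by
        funext i; rw [hT]
      rwa [heq] at this
    have hcast : (qlev x N T : ℝ≥0∞) ≤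
        (∏ i, ((t1 : Fin d → ℕ) i : ℝ≥0∞)) * (qlev x N (t2 : Fin d → ℕ) : ℝ≥0∞) := by
      calc (qlev x N T : ℝ≥0∞)
          ≤ ((((∏ i, (t1 : Fin d → ℕ) i : ℕ) : ℕ∞) *
              qlev x N (t2 : Fin d → ℕ) : ℕ∞) : ℝ≥0∞) := ENat.toENNReal_le.2 hkey
        _ = ((((∏ i, (t1 : Fin d → ℕ) i : ℕ) : ℕ∞) : ℝ≥0∞)) *
              (qlev x N (t2 : Fin d → ℕ) : ℝ≥0∞) := ENat.toENNReal_mul _ _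
        _ = (∏ i, ((t1 : Fin d → ℕ) i : ℝ≥0∞)) * (qlev x N (t2 : Fin d → ℕ) : ℝ≥0∞) := by
              rw [ENat.toENNReal_coe]
              push_cast
              rfl
    calc (qlev x N T : ℝ≥0∞) / ∏ i, (T i : ℝ≥0∞)
        ≤ ((∏ i, ((t1 : Fin d → ℕ) i : ℝ≥0∞)) * (qlev x N (t2 : Fin d → ℕ) : ℝ≥0∞)) /
            ∏ i, (T i : ℝ≥0∞) := ENNReal.div_le_div_right hcast _
      _ = ((∏ i, ((t1 : Fin d → ℕ) i : ℝ≥0∞)) * (qlev x N (t2 : Fin d → ℕ) : ℝ≥0∞)) /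
            ((∏ i, ((t1 : Fin d → ℕ) i : ℝ≥0∞)) * ∏ i, ((t2 : Fin d → ℕ) i : ℝ≥0∞)) := by
            rw [hprodT, mul_comm (∏ i, ((t2 : Fin d → ℕ) i : ℝ≥0∞)) _]
      _ = (qlev x N (t2 : Fin d → ℕ) : ℝ≥0∞) / ∏ i, ((t2 : Fin d → ℕ) i : ℝ≥0∞) :=
            ENNReal.mul_div_mul_left _ _ hP1ne0 hP1top
      _ = Cq (t2 : Fin d → ℕ) := rfl
  -- subadditivity at level T
  have hses : qlev x M T ≤ qlev x L T + qlev x N T :=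
    qlev_le_add_of_exact x f g hg hfg T
  have hBT : Bq T ≤ Aq (t1 : Fin d → ℕ) + Cq (t2 : Fin d → ℕ) := by
    calc Bq T = (qlev x M T : ℝ≥0∞) / ∏ i, (T i : ℝ≥0∞) := rfl
      _ ≤ ((qlev x L T : ℝ≥0∞) + (qlev x N T : ℝ≥0∞)) / ∏ i, (T i : ℝ≥0∞) := by
          apply ENNReal.div_le_div_right
          rw [← ENat.toENNReal_add]
          exact ENat.toENNReal_le.2 hses
      _ = (qlev x L T : ℝ≥0∞) / ∏ i, (T i : ℝ≥0∞) +
          (qlev x N T : ℝ≥0∞) / ∏ i, (T i : ℝ≥0∞) := ENNReal.add_div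
      _ ≤ Aq (t1 : Fin d → ℕ) + Cq (t2 : Fin d → ℕ) := add_le_add hALT hCNT
  calc (⨅ t : {t : Fin d → ℕ // ∀ i, s ≤ t i ∧ 0 < t i}, Bq (t : Fin d → ℕ))
      ≤ Bq T := iInf_le (fun t : {t : Fin d → ℕ // ∀ i, s ≤ t i ∧ 0 < t i} =>
        Bq (t : Fin d → ℕ)) ⟨T, hTmem⟩
    _ ≤ Aq (t1 : Fin d → ℕ) + Cq (t2 : Fin d → ℕ) := hBT
    _ ≤ (content x L + δ) + (content x N + δ) := add_le_add ht1.le ht2.le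
    _ = (content x L + content x N) + (δ + δ) := add_add_add_comm _ _ _ _
    _ = content x L + content x N + ε := by rw [hδ, ENNReal.add_halves]
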